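/- Let r be a prime power, m = 3, q = r³. Suppose a₀, a₁, a₂ ∈ F_q, f₀, f₁, f₂ ∈ F_r[X] are q-linearized, and z in the algebraic closure of F_r satisfies a₀f₀(z) + a₁f₁(z)^r + a₂f₂(z)^{r²} = 0. Then N_{q/r}(a₀)(f₀∘f₀∘f₀)(z) + N_{q/r}(a₁)(f₁∘f₁∘f₁)(z^{q}) + N_{q/r}(a₂)(f₂∘f₂∘f₂)(z^{q²}) − Tr_{q/r}(a₀a₁^r a₂^{r²})(f₀∘f₁∘f₂)(z^{q}) = 0, where the exponent of z in the last term corresponds to q^{(0+1+2)/3} = q. -/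

import Mathlib

open Polynomial Finset

namespace Stmt7Aux

variable {Ω : Type*} [Field Ω]

def lp (t n : ℕ) (c : ℕ → Ω) (x : Ω) : Ω := ∑ i ∈ Finset.range n, c i * x ^ t ^ i

lemma fix_pow {a : Ω} {t : ℕ} (ha : a ^ t = a) : ∀ i, a ^ t ^ i = a := by
  intro i
  induction i with
  | zero => simp
  | succ k ih => rw [pow_succ, pow_mul, ih, ha]

lemma lp_eval (t n : ℕ) (c : ℕ → Ω) (x : Ω) :
    (∑ i ∈ Finset.range n, C (c i) * X ^ t ^ i).eval x = lp t n c x := by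
  simp [lp, eval_finset_sum]

lemma lp_smul (t n : ℕ) (c : ℕ → Ω) {a : Ω} (ha : a ^ t = a) (x : Ω) :
    lp t n c (a * x) = a * lp t n c x := by
  unfold lp
  rw [Finset.mul_sum]
  exact Finset.sum_congr rfl fun i _ => by rw [mul_pow, fix_pow ha]; ring

variable {p : ℕ} [Fact p.Prime] [CharP Ω p]

lemma lp_pow (u t n : ℕ) (c : ℕ → Ω) (hc : ∀ i, c i ^ p ^ u = c i) (x : Ω) :
    lp t n c x ^ p ^ u = lp t n c (x ^ p ^ u) := by
  unfold lp
  rw [sum_pow_char_pow]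
  exact Finset.sum_congr rfl fun i _ => by rw [mul_pow, hc, pow_right_comm]

lemma lp_add (e t n : ℕ) (c : ℕ → Ω) (ht : t = p ^ e) (x y : Ω) :
    lp t n c (x + y) = lp t n c x + lp t n c y := by
  unfold lp
  rw [← Finset.sum_add_distrib]
  refine Finset.sum_congr rfl fun i _ => ?_
  subst ht
  rw [← pow_mul, add_pow_char_pow, mul_add]

lemma lp_zero (e t n : ℕ) (c : ℕ → Ω) (ht : t = p ^ e) : lp t n c (0 : Ω) = 0 := by
  unfold lp
  refine Finset.sum_eq_zero fun i _ => ?_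
  rw [zero_pow, mul_zero]
  subst ht
  exact pow_ne_zero _ (pow_ne_zero _ (Nat.Prime.pos Fact.out).ne')

lemma lp_neg (e t n : ℕ) (c : ℕ → Ω) (ht : t = p ^ e) (x : Ω) :
    lp t n c (-x) = - lp t n c x := by
  have h := lp_add e t n c ht x (-x)
  rw [add_neg_cancel, lp_zero e t n c ht] at h
  linear_combination -h

lemma lp_push (e t n : ℕ) (c : ℕ → Ω) (ht : t = p ^ e) {α β : Ω}
    (hα : α ^ t = α) (hβ : β ^ t = β) (u v : Ω) :
    lp t n c (-(α * u + β * v)) = -(α * lp t n c u + β * lp t n c v) := by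
  rw [lp_neg e t n c ht, lp_add e t n c ht, lp_smul t n c hα, lp_smul t n c hβ]

lemma lp_comm (e t n m : ℕ) (c d : ℕ → Ω) (ht : t = p ^ e)
    (hc : ∀ i, c i ^ t = c i) (hd : ∀ j, d j ^ t = d j) (x : Ω) :
    lp t n c (lp t m d x) = lp t m d (lp t n c x) := by
  have expand : ∀ (n m : ℕ) (c d : ℕ → Ω), (∀ j, d j ^ t = d j) →
      lp t n c (lp t m d x) = ∑ i ∈ Finset.range n, ∑ j ∈ Finset.range m,
        c i * d j * x ^ (t ^ i * t ^ j) := by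
    intro n m c d hd
    have sub : ∀ i : ℕ, (lp t m d x) ^ t ^ i = lp t m d (x ^ t ^ i) := by
      intro i
      have hti : t ^ i = p ^ (e * i) := by rw [ht, ← pow_mul]
      rw [hti]
      exact lp_pow (e * i) t m d (fun j => by rw [← hti]; exact fix_pow (hd j) i) x
    calc lp t n c (lp t m d x)
        = ∑ i ∈ Finset.range n, c i * lp t m d (x ^ t ^ i) := by
          refine Finset.sum_congr rfl fun i _ => ?_
          exact congrArg (fun w => c i * w) (sub i)
      _ = ∑ i ∈ Finset.range n, ∑ j ∈ Finset.range m, c i * d j * x ^ (t ^ i * t ^ j) := by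
          refine Finset.sum_congr rfl fun i _ => ?_
          unfold lp
          rw [Finset.mul_sum]
          refine Finset.sum_congr rfl fun j _ => ?_
          rw [pow_mul, mul_assoc]
  rw [expand n m c d hd, expand m n d c hc, Finset.sum_comm]
  refine Finset.sum_congr rfl fun j _ => Finset.sum_congr rfl fun i _ => ?_
  rw [mul_comm (t ^ j) (t ^ i)]
  ring

end Stmt7Aux

open Stmt7Aux

/-- The case `m = 3`, `q = r³`: if `a₀ f₀(z) + a₁ f₁(z)^r + a₂ f₂(z)^{r²} = 0`, where
`a₀, a₁, a₂ ∈ F_q` and `f₀, f₁, f₂` are `q`-linearized over `F_r`, then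
`N(a₀)(f₀∘f₀∘f₀)(z) + N(a₁)(f₁∘f₁∘f₁)(z^q) + N(a₂)(f₂∘f₂∘f₂)(z^{q²})
  − Tr(a₀a₁^r a₂^{r²})(f₀∘f₁∘f₂)(z^q) = 0`. -/
theorem stmt7 (r : ℕ) (hr : IsPrimePow r)
    (Ω : Type*) [Field Ω] [IsAlgClosed Ω]
    (K L : Subfield Ω) [Fintype K] [Fintype L]
    (hK : Fintype.card K = r) (hL : Fintype.card L = r ^ 3)
    (a₀ a₁ a₂ : Ω) (ha₀ : a₀ ∈ L) (ha₁ : a₁ ∈ L) (ha₂ : a₂ ∈ L)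
    (f₀ f₁ f₂ : Polynomial Ω)
    (hf₀ : ∃ (n : ℕ) (c : ℕ → Ω), (∀ i, c i ∈ K) ∧
      f₀ = ∑ i ∈ Finset.range n, C (c i) * X ^ (r ^ 3) ^ i)
    (hf₁ : ∃ (n : ℕ) (c : ℕ → Ω), (∀ i, c i ∈ K) ∧
      f₁ = ∑ i ∈ Finset.range n, C (c i) * X ^ (r ^ 3) ^ i)
    (hf₂ : ∃ (n : ℕ) (c : ℕ → Ω), (∀ i, c i ∈ K) ∧
      f₂ = ∑ i ∈ Finset.range n, C (c i) * X ^ (r ^ 3) ^ i)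
    (z : Ω) (hz : a₀ * f₀.eval z + a₁ * (f₁.eval z) ^ r + a₂ * (f₂.eval z) ^ r ^ 2 = 0) :
    a₀ ^ (1 + r + r ^ 2) * ((f₀.comp f₀).comp f₀).eval z +
      a₁ ^ (1 + r + r ^ 2) * ((f₁.comp f₁).comp f₁).eval (z ^ r ^ 3) +
      a₂ ^ (1 + r + r ^ 2) * ((f₂.comp f₂).comp f₂).eval (z ^ (r ^ 3) ^ 2) -
      (a₀ * a₁ ^ r * a₂ ^ r ^ 2 + (a₀ * a₁ ^ r * a₂ ^ r ^ 2) ^ r +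
          (a₀ * a₁ ^ r * a₂ ^ r ^ 2) ^ r ^ 2) *
        ((f₀.comp f₁).comp f₂).eval (z ^ r ^ 3) = 0 := by
  obtain ⟨n₀, c₀, hc₀, hf₀⟩ := hf₀
  obtain ⟨n₁, c₁, hc₁, hf₁⟩ := hf₁
  obtain ⟨n₂, c₂, hc₂, hf₂⟩ := hf₂
  -- set up the characteristic
  haveI := ringChar.charP K
  obtain ⟨nK, hpK, hcardK⟩ := FiniteField.card K (ringChar K)
  set p := ringChar K with hpdef
  haveI hFp : Fact p.Prime := ⟨hpK⟩
  haveI : CharP Ω p := charP_of_injective_ringHom (K.subtype).injective p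
  set e := (nK : ℕ) with hedef
  have hre : r = p ^ e := by rw [← hK, hcardK]
  have hr0 : r ≠ 0 := by rw [hre]; exact pow_ne_zero _ hpK.pos.ne'
  have hq : r ^ 3 = p ^ (e * 3) := by rw [hre, ← pow_mul]
  -- fixed-point facts
  have hcK : ∀ c : Ω, c ∈ K → c ^ r = c := by
    intro c hc
    have h := FiniteField.pow_card (⟨c, hc⟩ : K)
    rw [hK] at h
    simpa using congrArg (fun x : K => (x : Ω)) h
  have hcL : ∀ a : Ω, a ∈ L → a ^ r ^ 3 = a := by
    intro a ha
    have h := FiniteField.pow_card (⟨a, ha⟩ : L)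
    rw [hL] at h
    simpa using congrArg (fun x : L => (x : Ω)) h
  have fa₀ := hcL a₀ ha₀
  have fa₁ := hcL a₁ ha₁
  have fa₂ := hcL a₂ ha₂
  have far : ∀ a : Ω, a ^ r ^ 3 = a → (a ^ r) ^ r ^ 3 = a ^ r := fun a ha => by
    rw [pow_right_comm, ha]
  have farr : ∀ a : Ω, a ^ r ^ 3 = a → (a ^ r ^ 2) ^ r ^ 3 = a ^ r ^ 2 := fun a ha => by
    rw [pow_right_comm, ha]
  -- lifted lemmas for f₀, f₁, f₂
  have KEY₀ : ∀ (j : ℕ) (x : Ω), (f₀.eval x) ^ r ^ j = f₀.eval (x ^ r ^ j) := by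
    intro j x
    have hrj : r ^ j = p ^ (e * j) := by rw [hre, ← pow_mul]
    simp only [hf₀, lp_eval]
    rw [hrj]
    exact lp_pow _ _ _ _ (fun i => by rw [← hrj]; exact fix_pow (hcK _ (hc₀ i)) j) x
  have KEY₁ : ∀ (j : ℕ) (x : Ω), (f₁.eval x) ^ r ^ j = f₁.eval (x ^ r ^ j) := by
    intro j x
    have hrj : r ^ j = p ^ (e * j) := by rw [hre, ← pow_mul]
    simp only [hf₁, lp_eval]
    rw [hrj]
    exact lp_pow _ _ _ _ (fun i => by rw [← hrj]; exact fix_pow (hcK _ (hc₁ i)) j) x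
  have KEY₂ : ∀ (j : ℕ) (x : Ω), (f₂.eval x) ^ r ^ j = f₂.eval (x ^ r ^ j) := by
    intro j x
    have hrj : r ^ j = p ^ (e * j) := by rw [hre, ← pow_mul]
    simp only [hf₂, lp_eval]
    rw [hrj]
    exact lp_pow _ _ _ _ (fun i => by rw [← hrj]; exact fix_pow (hcK _ (hc₂ i)) j) x
  have KEY₀' : ∀ x : Ω, (f₀.eval x) ^ r = f₀.eval (x ^ r) := by
    intro x; have h := KEY₀ 1 x; rwa [pow_one] at h
  have KEY₁' : ∀ x : Ω, (f₁.eval x) ^ r = f₁.eval (x ^ r) := by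
    intro x; have h := KEY₁ 1 x; rwa [pow_one] at h
  have KEY₂' : ∀ x : Ω, (f₂.eval x) ^ r = f₂.eval (x ^ r) := by
    intro x; have h := KEY₂ 1 x; rwa [pow_one] at h
  have SMUL₀ : ∀ (α : Ω), α ^ r ^ 3 = α → ∀ x : Ω, f₀.eval (α * x) = α * f₀.eval x := by
    intro α hα x
    simp only [hf₀, lp_eval]
    exact lp_smul _ _ _ hα x
  have SMUL₁ : ∀ (α : Ω), α ^ r ^ 3 = α → ∀ x : Ω, f₁.eval (α * x) = α * f₁.eval x := by
    intro α hα x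
    simp only [hf₁, lp_eval]
    exact lp_smul _ _ _ hα x
  have SMUL₂ : ∀ (α : Ω), α ^ r ^ 3 = α → ∀ x : Ω, f₂.eval (α * x) = α * f₂.eval x := by
    intro α hα x
    simp only [hf₂, lp_eval]
    exact lp_smul _ _ _ hα x
  have PUSH₀ : ∀ (α β : Ω), α ^ r ^ 3 = α → β ^ r ^ 3 = β → ∀ u v : Ω,
      f₀.eval (-(α * u + β * v)) = -(α * f₀.eval u + β * f₀.eval v) := by
    intro α β hα hβ u v
    simp only [hf₀, lp_eval]
    exact lp_push (e * 3) _ _ _ hq hα hβ u v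
  have PUSH₁ : ∀ (α β : Ω), α ^ r ^ 3 = α → β ^ r ^ 3 = β → ∀ u v : Ω,
      f₁.eval (-(α * u + β * v)) = -(α * f₁.eval u + β * f₁.eval v) := by
    intro α β hα hβ u v
    simp only [hf₁, lp_eval]
    exact lp_push (e * 3) _ _ _ hq hα hβ u v
  have PUSH₂ : ∀ (α β : Ω), α ^ r ^ 3 = α → β ^ r ^ 3 = β → ∀ u v : Ω,
      f₂.eval (-(α * u + β * v)) = -(α * f₂.eval u + β * f₂.eval v) := by
    intro α β hα hβ u v
    simp only [hf₂, lp_eval]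
    exact lp_push (e * 3) _ _ _ hq hα hβ u v
  have COMM01 : ∀ x : Ω, f₀.eval (f₁.eval x) = f₁.eval (f₀.eval x) := by
    intro x
    simp only [hf₀, hf₁, lp_eval]
    exact lp_comm (e * 3) _ _ _ _ _ hq
      (fun i => fix_pow (hcK _ (hc₀ i)) 3) (fun j => fix_pow (hcK _ (hc₁ j)) 3) x
  have COMM02 : ∀ x : Ω, f₀.eval (f₂.eval x) = f₂.eval (f₀.eval x) := by
    intro x
    simp only [hf₀, hf₂, lp_eval]
    exact lp_comm (e * 3) _ _ _ _ _ hq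
      (fun i => fix_pow (hcK _ (hc₀ i)) 3) (fun j => fix_pow (hcK _ (hc₂ j)) 3) x
  have COMM12 : ∀ x : Ω, f₁.eval (f₂.eval x) = f₂.eval (f₁.eval x) := by
    intro x
    simp only [hf₁, hf₂, lp_eval]
    exact lp_comm (e * 3) _ _ _ _ _ hq
      (fun i => fix_pow (hcK _ (hc₁ i)) 3) (fun j => fix_pow (hcK _ (hc₂ j)) 3) x
  -- the chain of equations E0 … E4
  have E0 : a₀ * f₀.eval z + a₁ * f₁.eval (z ^ r) + a₂ * f₂.eval (z ^ r ^ 2) = 0 := by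
    rw [KEY₁' z, KEY₂ 2 z] at hz
    exact hz
  have STEP : ∀ u v w : Ω, u + v + w = 0 → u ^ r + v ^ r + w ^ r = 0 := by
    intro u v w h
    have h2 : (u + v + w) ^ r = 0 := by rw [h]; exact zero_pow hr0
    rw [hre, add_pow_char_pow, add_pow_char_pow] at h2
    rw [hre]
    exact h2
  have TERM₀ : ∀ (α x : Ω), (α * f₀.eval x) ^ r = α ^ r * f₀.eval (x ^ r) := by
    intro α x; rw [mul_pow, KEY₀']
  have TERM₁ : ∀ (α x : Ω), (α * f₁.eval x) ^ r = α ^ r * f₁.eval (x ^ r) := by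
    intro α x; rw [mul_pow, KEY₁']
  have TERM₂ : ∀ (α x : Ω), (α * f₂.eval x) ^ r = α ^ r * f₂.eval (x ^ r) := by
    intro α x; rw [mul_pow, KEY₂']
  have hz1 : (z ^ r) ^ r = z ^ r ^ 2 := by rw [← pow_mul]; congr 1 <;> ring
  have hz2 : (z ^ r ^ 2) ^ r = z ^ r ^ 3 := by rw [← pow_mul]; congr 1 <;> ring
  have hz3 : (z ^ r ^ 3) ^ r = z ^ r ^ 4 := by rw [← pow_mul]; congr 1 <;> ring
  have hz4 : (z ^ r ^ 4) ^ r = z ^ r ^ 5 := by rw [← pow_mul]; congr 1 <;> ring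
  have hz5 : (z ^ r ^ 5) ^ r = z ^ r ^ 6 := by rw [← pow_mul]; congr 1 <;> ring
  have cc2 : ∀ a : Ω, (a ^ r) ^ r = a ^ r ^ 2 := fun a => by rw [← pow_mul]; congr 1 <;> ring
  have cc3 : ∀ a : Ω, (a ^ r ^ 2) ^ r = a ^ r ^ 3 := fun a => by rw [← pow_mul]; congr 1 <;> ring
  have E1 : a₀ ^ r * f₀.eval (z ^ r) + a₁ ^ r * f₁.eval (z ^ r ^ 2)
      + a₂ ^ r * f₂.eval (z ^ r ^ 3) = 0 := by
    have h := STEP _ _ _ E0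
    rw [TERM₀, TERM₁, TERM₂, hz1, hz2] at h
    exact h
  have E2 : a₀ ^ r ^ 2 * f₀.eval (z ^ r ^ 2) + a₁ ^ r ^ 2 * f₁.eval (z ^ r ^ 3)
      + a₂ ^ r ^ 2 * f₂.eval (z ^ r ^ 4) = 0 := by
    have h := STEP _ _ _ E1
    rw [TERM₀, TERM₁, TERM₂, hz1, hz2, hz3, cc2 a₀, cc2 a₁, cc2 a₂] at h
    exact h
  have E3 : a₀ * f₀.eval (z ^ r ^ 3) + a₁ * f₁.eval (z ^ r ^ 4)
      + a₂ * f₂.eval (z ^ r ^ 5) = 0 := by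
    have h := STEP _ _ _ E2
    rw [TERM₀, TERM₁, TERM₂, hz2, hz3, hz4, cc3 a₀, cc3 a₁, cc3 a₂, fa₀, fa₁, fa₂] at h
    exact h
  have E4 : a₀ ^ r * f₀.eval (z ^ r ^ 4) + a₁ ^ r * f₁.eval (z ^ r ^ 5)
      + a₂ ^ r * f₂.eval (z ^ r ^ 6) = 0 := by
    have h := STEP _ _ _ E3
    rw [TERM₀, TERM₁, TERM₂, hz3, hz4, hz5] at h
    exact h
  -- rearranged forms
  have h0 : a₀ * f₀.eval z = -(a₁ * f₁.eval (z ^ r) + a₂ * f₂.eval (z ^ r ^ 2)) := by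
    linear_combination E0
  have h1 : a₀ ^ r * f₀.eval (z ^ r)
      = -(a₁ ^ r * f₁.eval (z ^ r ^ 2) + a₂ ^ r * f₂.eval (z ^ r ^ 3)) := by
    linear_combination E1
  have h2a : a₁ ^ r ^ 2 * f₁.eval (z ^ r ^ 3)
      = -(a₀ ^ r ^ 2 * f₀.eval (z ^ r ^ 2) + a₂ ^ r ^ 2 * f₂.eval (z ^ r ^ 4)) := by
    linear_combination E2
  have h2b : a₀ ^ r ^ 2 * f₀.eval (z ^ r ^ 2)
      = -(a₁ ^ r ^ 2 * f₁.eval (z ^ r ^ 3) + a₂ ^ r ^ 2 * f₂.eval (z ^ r ^ 4)) := by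
    linear_combination E2
  have h3 : a₁ * f₁.eval (z ^ r ^ 4)
      = -(a₀ * f₀.eval (z ^ r ^ 3) + a₂ * f₂.eval (z ^ r ^ 5)) := by
    linear_combination E3
  have h4 : a₂ ^ r * f₂.eval (z ^ r ^ 6)
      = -(a₀ ^ r * f₀.eval (z ^ r ^ 4) + a₁ ^ r * f₁.eval (z ^ r ^ 5)) := by
    linear_combination E4
  -- rewrite the goal
  simp only [eval_comp]
  have hz6 : z ^ (r ^ 3) ^ 2 = z ^ r ^ 6 := by rw [← pow_mul]
  rw [hz6]
  -- main terms
  have hT0 : a₀ ^ (1 + r + r ^ 2) * f₀.eval (f₀.eval (f₀.eval z))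
      = -(a₀ ^ (r + r ^ 2) * a₁ * f₀.eval (f₀.eval (f₁.eval (z ^ r)))
        + a₀ ^ (r + r ^ 2) * a₂ * f₀.eval (f₀.eval (f₂.eval (z ^ r ^ 2)))) := by
    calc a₀ ^ (1 + r + r ^ 2) * f₀.eval (f₀.eval (f₀.eval z))
        = a₀ ^ (r + r ^ 2) * f₀.eval (f₀.eval (a₀ * f₀.eval z)) := by
          rw [SMUL₀ a₀ fa₀, SMUL₀ a₀ fa₀]; ring
      _ = a₀ ^ (r + r ^ 2) * f₀.eval (f₀.eval
            (-(a₁ * f₁.eval (z ^ r) + a₂ * f₂.eval (z ^ r ^ 2)))) := by rw [h0]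
      _ = a₀ ^ (r + r ^ 2) * f₀.eval
            (-(a₁ * f₀.eval (f₁.eval (z ^ r)) + a₂ * f₀.eval (f₂.eval (z ^ r ^ 2)))) := by
          rw [PUSH₀ a₁ a₂ fa₁ fa₂]
      _ = a₀ ^ (r + r ^ 2) * (-(a₁ * f₀.eval (f₀.eval (f₁.eval (z ^ r)))
            + a₂ * f₀.eval (f₀.eval (f₂.eval (z ^ r ^ 2))))) := by
          rw [PUSH₀ a₁ a₂ fa₁ fa₂]
      _ = -(a₀ ^ (r + r ^ 2) * a₁ * f₀.eval (f₀.eval (f₁.eval (z ^ r)))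
            + a₀ ^ (r + r ^ 2) * a₂ * f₀.eval (f₀.eval (f₂.eval (z ^ r ^ 2)))) := by ring
  have hT1 : a₁ ^ (1 + r + r ^ 2) * f₁.eval (f₁.eval (f₁.eval (z ^ r ^ 3)))
      = -(a₁ ^ (1 + r) * a₀ ^ r ^ 2 * f₁.eval (f₁.eval (f₀.eval (z ^ r ^ 2)))
        + a₁ ^ (1 + r) * a₂ ^ r ^ 2 * f₁.eval (f₁.eval (f₂.eval (z ^ r ^ 4)))) := by
    calc a₁ ^ (1 + r + r ^ 2) * f₁.eval (f₁.eval (f₁.eval (z ^ r ^ 3)))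
        = a₁ ^ (1 + r) * f₁.eval (f₁.eval (a₁ ^ r ^ 2 * f₁.eval (z ^ r ^ 3))) := by
          rw [SMUL₁ _ (farr a₁ fa₁), SMUL₁ _ (farr a₁ fa₁)]; ring
      _ = a₁ ^ (1 + r) * f₁.eval (f₁.eval
            (-(a₀ ^ r ^ 2 * f₀.eval (z ^ r ^ 2) + a₂ ^ r ^ 2 * f₂.eval (z ^ r ^ 4)))) := by
          rw [h2a]
      _ = a₁ ^ (1 + r) * f₁.eval (-(a₀ ^ r ^ 2 * f₁.eval (f₀.eval (z ^ r ^ 2))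
            + a₂ ^ r ^ 2 * f₁.eval (f₂.eval (z ^ r ^ 4)))) := by
          rw [PUSH₁ _ _ (farr a₀ fa₀) (farr a₂ fa₂)]
      _ = a₁ ^ (1 + r) * (-(a₀ ^ r ^ 2 * f₁.eval (f₁.eval (f₀.eval (z ^ r ^ 2)))
            + a₂ ^ r ^ 2 * f₁.eval (f₁.eval (f₂.eval (z ^ r ^ 4))))) := by
          rw [PUSH₁ _ _ (farr a₀ fa₀) (farr a₂ fa₂)]
      _ = -(a₁ ^ (1 + r) * a₀ ^ r ^ 2 * f₁.eval (f₁.eval (f₀.eval (z ^ r ^ 2)))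
            + a₁ ^ (1 + r) * a₂ ^ r ^ 2 * f₁.eval (f₁.eval (f₂.eval (z ^ r ^ 4)))) := by ring
  have hT2 : a₂ ^ (1 + r + r ^ 2) * f₂.eval (f₂.eval (f₂.eval (z ^ r ^ 6)))
      = -(a₂ ^ (1 + r ^ 2) * a₀ ^ r * f₂.eval (f₂.eval (f₀.eval (z ^ r ^ 4)))
        + a₂ ^ (1 + r ^ 2) * a₁ ^ r * f₂.eval (f₂.eval (f₁.eval (z ^ r ^ 5)))) := by
    calc a₂ ^ (1 + r + r ^ 2) * f₂.eval (f₂.eval (f₂.eval (z ^ r ^ 6)))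
        = a₂ ^ (1 + r ^ 2) * f₂.eval (f₂.eval (a₂ ^ r * f₂.eval (z ^ r ^ 6))) := by
          rw [SMUL₂ _ (far a₂ fa₂), SMUL₂ _ (far a₂ fa₂)]; ring
      _ = a₂ ^ (1 + r ^ 2) * f₂.eval (f₂.eval
            (-(a₀ ^ r * f₀.eval (z ^ r ^ 4) + a₁ ^ r * f₁.eval (z ^ r ^ 5)))) := by
          rw [h4]
      _ = a₂ ^ (1 + r ^ 2) * f₂.eval (-(a₀ ^ r * f₂.eval (f₀.eval (z ^ r ^ 4))
            + a₁ ^ r * f₂.eval (f₁.eval (z ^ r ^ 5)))) := by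
          rw [PUSH₂ _ _ (far a₀ fa₀) (far a₁ fa₁)]
      _ = a₂ ^ (1 + r ^ 2) * (-(a₀ ^ r * f₂.eval (f₂.eval (f₀.eval (z ^ r ^ 4)))
            + a₁ ^ r * f₂.eval (f₂.eval (f₁.eval (z ^ r ^ 5))))) := by
          rw [PUSH₂ _ _ (far a₀ fa₀) (far a₁ fa₁)]
      _ = -(a₂ ^ (1 + r ^ 2) * a₀ ^ r * f₂.eval (f₂.eval (f₀.eval (z ^ r ^ 4)))
            + a₂ ^ (1 + r ^ 2) * a₁ ^ r * f₂.eval (f₂.eval (f₁.eval (z ^ r ^ 5)))) := by ring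
  -- cross terms
  have hX13 : a₀ ^ (r + r ^ 2) * a₁ * f₀.eval (f₀.eval (f₁.eval (z ^ r)))
      = -(a₀ ^ r ^ 2 * a₁ * a₁ ^ r * f₁.eval (f₁.eval (f₀.eval (z ^ r ^ 2)))
        + a₀ ^ r ^ 2 * a₁ * a₂ ^ r * f₀.eval (f₁.eval (f₂.eval (z ^ r ^ 3)))) := by
    calc a₀ ^ (r + r ^ 2) * a₁ * f₀.eval (f₀.eval (f₁.eval (z ^ r)))
        = a₀ ^ r ^ 2 * a₁ * f₀.eval (f₁.eval (a₀ ^ r * f₀.eval (z ^ r))) := by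
          rw [COMM01 (z ^ r), SMUL₁ _ (far a₀ fa₀), SMUL₀ _ (far a₀ fa₀)]; ring
      _ = a₀ ^ r ^ 2 * a₁ * f₀.eval (f₁.eval
            (-(a₁ ^ r * f₁.eval (z ^ r ^ 2) + a₂ ^ r * f₂.eval (z ^ r ^ 3)))) := by
          rw [h1]
      _ = a₀ ^ r ^ 2 * a₁ * f₀.eval (-(a₁ ^ r * f₁.eval (f₁.eval (z ^ r ^ 2))
            + a₂ ^ r * f₁.eval (f₂.eval (z ^ r ^ 3)))) := by
          rw [PUSH₁ _ _ (far a₁ fa₁) (far a₂ fa₂)]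
      _ = a₀ ^ r ^ 2 * a₁ * (-(a₁ ^ r * f₀.eval (f₁.eval (f₁.eval (z ^ r ^ 2)))
            + a₂ ^ r * f₀.eval (f₁.eval (f₂.eval (z ^ r ^ 3))))) := by
          rw [PUSH₀ _ _ (far a₁ fa₁) (far a₂ fa₂)]
      _ = -(a₀ ^ r ^ 2 * a₁ * a₁ ^ r * f₁.eval (f₁.eval (f₀.eval (z ^ r ^ 2)))
            + a₀ ^ r ^ 2 * a₁ * a₂ ^ r * f₀.eval (f₁.eval (f₂.eval (z ^ r ^ 3)))) := by
          rw [COMM01 (f₁.eval (z ^ r ^ 2)), COMM01 (z ^ r ^ 2)]; ring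
  have hX25 : a₀ ^ (r + r ^ 2) * a₂ * f₀.eval (f₀.eval (f₂.eval (z ^ r ^ 2)))
      = -(a₀ ^ r * a₂ * a₁ ^ r ^ 2 * f₀.eval (f₁.eval (f₂.eval (z ^ r ^ 3)))
        + a₀ ^ r * a₂ * a₂ ^ r ^ 2 * f₂.eval (f₂.eval (f₀.eval (z ^ r ^ 4)))) := by
    calc a₀ ^ (r + r ^ 2) * a₂ * f₀.eval (f₀.eval (f₂.eval (z ^ r ^ 2)))
        = a₀ ^ r * a₂ * f₀.eval (f₂.eval (a₀ ^ r ^ 2 * f₀.eval (z ^ r ^ 2))) := by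
          rw [COMM02 (z ^ r ^ 2), SMUL₂ _ (farr a₀ fa₀), SMUL₀ _ (farr a₀ fa₀)]; ring
      _ = a₀ ^ r * a₂ * f₀.eval (f₂.eval
            (-(a₁ ^ r ^ 2 * f₁.eval (z ^ r ^ 3) + a₂ ^ r ^ 2 * f₂.eval (z ^ r ^ 4)))) := by
          rw [h2b]
      _ = a₀ ^ r * a₂ * f₀.eval (-(a₁ ^ r ^ 2 * f₂.eval (f₁.eval (z ^ r ^ 3))
            + a₂ ^ r ^ 2 * f₂.eval (f₂.eval (z ^ r ^ 4)))) := by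
          rw [PUSH₂ _ _ (farr a₁ fa₁) (farr a₂ fa₂)]
      _ = a₀ ^ r * a₂ * (-(a₁ ^ r ^ 2 * f₀.eval (f₂.eval (f₁.eval (z ^ r ^ 3)))
            + a₂ ^ r ^ 2 * f₀.eval (f₂.eval (f₂.eval (z ^ r ^ 4))))) := by
          rw [PUSH₀ _ _ (farr a₁ fa₁) (farr a₂ fa₂)]
      _ = -(a₀ ^ r * a₂ * a₁ ^ r ^ 2 * f₀.eval (f₁.eval (f₂.eval (z ^ r ^ 3)))
            + a₀ ^ r * a₂ * a₂ ^ r ^ 2 * f₂.eval (f₂.eval (f₀.eval (z ^ r ^ 4)))) := by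
          rw [← COMM12 (z ^ r ^ 3), COMM02 (f₂.eval (z ^ r ^ 4)), COMM02 (z ^ r ^ 4)]; ring
  have hX46 : a₁ ^ (1 + r) * a₂ ^ r ^ 2 * f₁.eval (f₁.eval (f₂.eval (z ^ r ^ 4)))
      = -(a₁ ^ r * a₂ ^ r ^ 2 * a₀ * f₀.eval (f₁.eval (f₂.eval (z ^ r ^ 3)))
        + a₁ ^ r * a₂ ^ r ^ 2 * a₂ * f₂.eval (f₂.eval (f₁.eval (z ^ r ^ 5)))) := by
    calc a₁ ^ (1 + r) * a₂ ^ r ^ 2 * f₁.eval (f₁.eval (f₂.eval (z ^ r ^ 4)))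
        = a₁ ^ r * a₂ ^ r ^ 2 * f₁.eval (f₂.eval (a₁ * f₁.eval (z ^ r ^ 4))) := by
          rw [COMM12 (z ^ r ^ 4), SMUL₂ _ fa₁, SMUL₁ _ fa₁]; ring
      _ = a₁ ^ r * a₂ ^ r ^ 2 * f₁.eval (f₂.eval
            (-(a₀ * f₀.eval (z ^ r ^ 3) + a₂ * f₂.eval (z ^ r ^ 5)))) := by
          rw [h3]
      _ = a₁ ^ r * a₂ ^ r ^ 2 * f₁.eval (-(a₀ * f₂.eval (f₀.eval (z ^ r ^ 3))
            + a₂ * f₂.eval (f₂.eval (z ^ r ^ 5)))) := by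
          rw [PUSH₂ _ _ fa₀ fa₂]
      _ = a₁ ^ r * a₂ ^ r ^ 2 * (-(a₀ * f₁.eval (f₂.eval (f₀.eval (z ^ r ^ 3)))
            + a₂ * f₁.eval (f₂.eval (f₂.eval (z ^ r ^ 5))))) := by
          rw [PUSH₁ _ _ fa₀ fa₂]
      _ = -(a₁ ^ r * a₂ ^ r ^ 2 * a₀ * f₀.eval (f₁.eval (f₂.eval (z ^ r ^ 3)))
            + a₁ ^ r * a₂ ^ r ^ 2 * a₂ * f₂.eval (f₂.eval (f₁.eval (z ^ r ^ 5)))) := by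
          rw [← COMM02 (z ^ r ^ 3), ← COMM01 (f₂.eval (z ^ r ^ 3)),
            COMM12 (f₂.eval (z ^ r ^ 5)), COMM12 (z ^ r ^ 5)]; ring
  -- trace coefficient reductions
  have hb1 : (a₀ * a₁ ^ r * a₂ ^ r ^ 2) ^ r = a₀ ^ r * a₁ ^ r ^ 2 * a₂ := by
    rw [mul_pow, mul_pow, ← pow_mul, ← pow_mul, show r * r = r ^ 2 by ring,
      show r ^ 2 * r = r ^ 3 by ring, fa₂]
  have hb2 : (a₀ * a₁ ^ r * a₂ ^ r ^ 2) ^ r ^ 2 = a₀ ^ r ^ 2 * a₁ * a₂ ^ r := by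
    rw [mul_pow, mul_pow, ← pow_mul, ← pow_mul, show r * r ^ 2 = r ^ 3 by ring,
      show r ^ 2 * r ^ 2 = r ^ 3 * r by ring, fa₁, pow_mul, fa₂]
  linear_combination hT0 + hT1 + hT2 - hX13 - hX25 - hX46
    - (hb1 + hb2) * (f₀.eval (f₁.eval (f₂.eval (z ^ r ^ 3))))
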